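/- Let v_1, ..., v_r be nonzero vectors in ℝ^n spanning ℝ^n, I ⊆ {1,...,r}, and for real numbers d_1, ..., d_r define P_{d,I} = {u ∈ ℝ^n : ⟨u, v_i⟩ ≥ -d_i if and only if i ∈ I}. Then whether P_{d,I} is bounded is independent of the choice of d whenever P_{d,I} is nonempty; more precisely, P_{d,I} is unbounded for some choice of d making it nonempty if and only if there exists a nonzero w ∈ ℝ^n with ⟨w, v_i⟩ ≥ 0 for all i ∈ I and ⟨w, v_i⟩ ≤ 0 for all i ∉ I. -/

import Mathlib

open Filter Topology

private lemma cont_f' {n r : ℕ} (v : Fin r → Fin n → ℝ) (i : Fin r) :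
    Continuous (fun u : Fin n → ℝ => ∑ j, u j * v i j) :=
  continuous_finset_sum _ fun j _ => (continuous_apply j).mul continuous_const

private lemma f_smul' {n r : ℕ} (v : Fin r → Fin n → ℝ) (i : Fin r) (a : ℝ) (u : Fin n → ℝ) :
    (∑ j, (a • u) j * v i j) = a * ∑ j, u j * v i j := by
  simp [Finset.mul_sum, mul_assoc]

private lemma f_add' {n r : ℕ} (v : Fin r → Fin n → ℝ) (i : Fin r) (u w : Fin n → ℝ) :
    (∑ j, (u + w) j * v i j) = (∑ j, u j * v i j) + ∑ j, w j * v i j := by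
  rw [← Finset.sum_add_distrib]
  congr 1; ext j; simp [add_mul]

private lemma unbounded_of_w' {n r : ℕ} (v : Fin r → Fin n → ℝ) (I : Finset (Fin r))
    (d : Fin r → ℝ) (w : Fin n → ℝ) (hw : w ≠ 0)
    (h1 : ∀ i ∈ I, 0 ≤ ∑ j, w j * v i j) (h2 : ∀ i ∉ I, ∑ j, w j * v i j ≤ 0)
    (u : Fin n → ℝ) (hu : ∀ i, i ∈ I ↔ -(d i) ≤ ∑ j, u j * v i j) :
    ¬ Bornology.IsBounded {x : Fin n → ℝ | ∀ i, i ∈ I ↔ -(d i) ≤ ∑ j, x j * v i j} := by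
  intro hb
  obtain ⟨C, hC⟩ := hb.exists_norm_le
  have hwpos : 0 < ‖w‖ := norm_pos_iff.2 hw
  have hCu : 0 ≤ C + ‖u‖ + 1 := by
    have := hC u hu
    have := norm_nonneg u
    linarith
  set t : ℝ := (C + ‖u‖ + 1) / ‖w‖ with ht
  have htn : 0 ≤ t := div_nonneg hCu hwpos.le
  have hmem : (u + t • w) ∈ {x : Fin n → ℝ | ∀ i, i ∈ I ↔ -(d i) ≤ ∑ j, x j * v i j} := by
    intro i
    rw [f_add' v i u (t • w), f_smul' v i t w]
    by_cases hi : i ∈ I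
    · simp only [hi, true_iff]
      have h1' := h1 i hi
      have := (hu i).1 hi
      nlinarith
    · simp only [hi, false_iff, not_le]
      have h2' := h2 i hi
      have : ¬ (-(d i) ≤ ∑ j, u j * v i j) := fun h => hi ((hu i).2 h)
      push_neg at this
      nlinarith
  have hle := hC _ hmem
  have h1' : ‖t • w‖ = C + ‖u‖ + 1 := by
    rw [norm_smul, Real.norm_of_nonneg htn, ht, div_mul_cancel₀ _ hwpos.ne']
  have h2' : ‖t • w‖ ≤ ‖u + t • w‖ + ‖u‖ := by
    calc ‖t • w‖ = ‖(u + t • w) - u‖ := by congr 1; abel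
    _ ≤ ‖u + t • w‖ + ‖u‖ := norm_sub_le _ _
  linarith

private lemma exists_w' {n r : ℕ} (v : Fin r → Fin n → ℝ) (I : Finset (Fin r)) (d : Fin r → ℝ)
    (h : ¬ Bornology.IsBounded {u : Fin n → ℝ | ∀ i, i ∈ I ↔ -(d i) ≤ ∑ j, u j * v i j}) :
    ∃ w : Fin n → ℝ, w ≠ 0 ∧ (∀ i ∈ I, 0 ≤ ∑ j, w j * v i j) ∧
      (∀ i ∉ I, ∑ j, w j * v i j ≤ 0) := by
  have hseq : ∀ k : ℕ, ∃ u : Fin n → ℝ,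
      (∀ i, i ∈ I ↔ -(d i) ≤ ∑ j, u j * v i j) ∧ ((k : ℝ) + 1) ≤ ‖u‖ := by
    intro k
    by_contra hc
    push_neg at hc
    exact h (isBounded_iff_forall_norm_le.2 ⟨(k : ℝ) + 1, fun x hx => (hc x hx).le⟩)
  choose u hu hnorm using hseq
  have hcpos : ∀ k, (0 : ℝ) < ‖u k‖ := fun k => by
    have := hnorm k; have : (0:ℝ) < (k:ℝ) + 1 := by positivity
    linarith [hnorm k]
  set W : ℕ → Fin n → ℝ := fun k => ‖u k‖⁻¹ • u k with hW
  have hWs : ∀ k, W k ∈ Metric.sphere (0 : Fin n → ℝ) 1 := by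
    intro k
    rw [mem_sphere_zero_iff_norm, hW, norm_smul, Real.norm_of_nonneg (inv_nonneg.2 (hcpos k).le),
      inv_mul_cancel₀ (hcpos k).ne']
  obtain ⟨a, ha, φ, hφmono, hφtend⟩ := (isCompact_sphere (0 : Fin n → ℝ) 1).tendsto_subseq hWs
  have hane : a ≠ 0 := by
    rw [mem_sphere_zero_iff_norm] at ha
    intro h0; rw [h0, norm_zero] at ha; norm_num at ha
  -- tendsto inverse norms to 0
  have hinv : Tendsto (fun k => ‖u (φ k)‖⁻¹) atTop (𝓝 0) := by
    refine squeeze_zero (fun k => inv_nonneg.2 (hcpos _).le) (fun k => ?_)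
      (by simpa [one_div] using tendsto_one_div_add_atTop_nhds_zero_nat)
    rw [one_div]
    apply inv_anti₀ (by positivity)
    calc ((k:ℝ) + 1) ≤ (φ k : ℝ) + 1 := by
          have h' : k ≤ φ k := hφmono.le_apply
          have : (k:ℝ) ≤ (φ k : ℝ) := by exact_mod_cast h'
          linarith
    _ ≤ ‖u (φ k)‖ := hnorm (φ k)
  refine ⟨a, hane, ?_, ?_⟩
  · intro i hi
    have htW : Tendsto (fun k => ∑ j, W (φ k) j * v i j) atTop (𝓝 (∑ j, a j * v i j)) :=
      ((cont_f' v i).tendsto a).comp hφtend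
    have htg : Tendsto (fun k => ‖u (φ k)‖⁻¹ * (-(d i))) atTop (𝓝 0) := by
      simpa using hinv.mul_const (-(d i))
    refine le_of_tendsto_of_tendsto' htg htW fun k => ?_
    rw [hW, f_smul']
    exact mul_le_mul_of_nonneg_left ((hu (φ k) i).1 hi) (inv_nonneg.2 (hcpos _).le)
  · intro i hi
    have htW : Tendsto (fun k => ∑ j, W (φ k) j * v i j) atTop (𝓝 (∑ j, a j * v i j)) :=
      ((cont_f' v i).tendsto a).comp hφtend
    have htg : Tendsto (fun k => ‖u (φ k)‖⁻¹ * (-(d i))) atTop (𝓝 0) := by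
      simpa using hinv.mul_const (-(d i))
    refine le_of_tendsto_of_tendsto' htW htg fun k => ?_
    rw [hW, f_smul']
    have : ¬ (-(d i) ≤ ∑ j, u (φ k) j * v i j) := fun h => hi ((hu (φ k) i).2 h)
    push_neg at this
    exact mul_le_mul_of_nonneg_left this.le (inv_nonneg.2 (hcpos _).le)

theorem boundedness_of_mixed_region_independent_of_constants
    (n r : ℕ) (v : Fin r → Fin n → ℝ)
    (hv : ∀ i, v i ≠ 0)
    (hspan : Submodule.span ℝ (Set.range v) = ⊤)
    (I : Finset (Fin r))
    (P : (Fin r → ℝ) → Set (Fin n → ℝ))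
    (hP : ∀ d, P d = {u : Fin n → ℝ | ∀ i, i ∈ I ↔ -(d i) ≤ ∑ j, u j * v i j}) :
    (∀ d d', (P d).Nonempty → (P d').Nonempty →
        (Bornology.IsBounded (P d) ↔ Bornology.IsBounded (P d'))) ∧
    ((∃ d, (P d).Nonempty ∧ ¬ Bornology.IsBounded (P d)) ↔
      ∃ w : Fin n → ℝ, w ≠ 0 ∧ (∀ i ∈ I, 0 ≤ ∑ j, w j * v i j) ∧
        (∀ i ∉ I, ∑ j, w j * v i j ≤ 0)) := by
  have key : ∀ d d', (P d').Nonempty → ¬ Bornology.IsBounded (P d) →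
      ¬ Bornology.IsBounded (P d') := by
    intro d d' ⟨u', hu'⟩ hnb
    rw [hP] at hnb hu' ⊢
    obtain ⟨w, hw, h1, h2⟩ := exists_w' v I d hnb
    exact unbounded_of_w' v I d' w hw h1 h2 u' hu'
  constructor
  · intro d d' hd hd'
    constructor
    · intro hb
      by_contra hnb
      exact key d' d hd hnb hb
    · intro hb
      by_contra hnb
      exact key d d' hd' hnb hb
  · constructor
    · rintro ⟨d, hd, hnb⟩
      rw [hP] at hnb
      exact exists_w' v I d hnb
    · rintro ⟨w, hw, h1, h2⟩
      refine ⟨fun i => if i ∈ I then 0 else -1, ?_, ?_⟩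
      · refine ⟨0, ?_⟩
        rw [hP]
        intro i
        by_cases hi : i ∈ I <;> simp [hi]
      · rw [hP]
        apply unbounded_of_w' v I _ w hw h1 h2 0
        intro i
        by_cases hi : i ∈ I <;> simp [hi]
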